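/- Let f : ℝⁿ → ℝ be μ-strongly convex and differentiable, let H be SPD with condition number at most σ, and suppose ∇f is L-Lipschitz on the segment from v to the exact line search point. Then one quasi-Newton step with exact line search from v satisfies f(v⁺) - f(v*) ≤ (1 - μ/(σ²L)) (f(v) - f(v*)). -/

import Mathlib

open Matrix RealInnerProductSpace Set

section Helpers

variable {E : Type*} [NormedAddCommGroup E] [InnerProductSpace ℝ E] [CompleteSpace E]

/-- First-order condition for convex differentiable functions. -/
lemma convex_first_order {h : E → ℝ} (hc : ConvexOn ℝ Set.univ h) {x g : E}
    (hg : HasGradientAt h g x) (y : E) : h x + ⟪g, y - x⟫ ≤ h y := by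
  set φ : ℝ → ℝ := fun t => h (x + t • (y - x)) with hφdef
  have hc' : ConvexOn ℝ Set.univ φ := by
    have h2 := hc.comp_affineMap (AffineMap.lineMap x y)
    have : φ = h ∘ (AffineMap.lineMap x y) := by
      funext t
      simp only [hφdef, Function.comp_apply, AffineMap.lineMap_apply_module]
      congr 1
      module
    rw [this]
    simpa using h2
  have hD : HasDerivAt φ ⟪g, y - x⟫ 0 := by
    have hA : HasDerivAt (fun t : ℝ => x + t • (y - x)) (y - x) 0 := by
      simpa using ((hasDerivAt_id (0:ℝ)).smul_const (y - x)).const_add x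
    have hx0 : x + (0:ℝ) • (y - x) = x := by simp
    have hg' : HasFDerivAt h ((InnerProductSpace.toDual ℝ E) g) (x + (0:ℝ) • (y - x)) := by
      rw [hx0]; exact hg.hasFDerivAt
    have := hg'.comp_hasDerivAt 0 hA
    rw [InnerProductSpace.toDual_apply_apply] at this; exact this
  have hs := hc'.le_slope_of_hasDerivAt (mem_univ 0) (mem_univ 1) one_pos hD
  rw [slope_def_field] at hs
  simp only [hφdef] at hs
  norm_num at hs
  linarith

/-- First-order condition for strongly convex differentiable functions. -/
lemma strong_first_order {f : E → ℝ} {μ : ℝ}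
    (hsc : ConvexOn ℝ Set.univ (fun x => f x - μ / 2 * ‖x‖ ^ 2)) (hf : Differentiable ℝ f)
    (x y : E) :
    f x + ⟪gradient f x, y - x⟫ + μ / 2 * ‖y - x‖ ^ 2 ≤ f y := by
  set h : E → ℝ := fun z => f z - μ / 2 * ‖z‖ ^ 2 with hdef
  have hgrad : HasGradientAt h (gradient f x - (μ / 2 * 2) • x) x := by
    rw [hasGradientAt_iff_hasFDerivAt]
    have h1 : HasFDerivAt f ((InnerProductSpace.toDual ℝ E) (gradient f x)) x :=
      (hf x).hasGradientAt.hasFDerivAt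
    have h2 := (hasFDerivAt_id x).inner ℝ (hasFDerivAt_id x)
    have heq : h = fun z => f z - μ / 2 * ⟪z, z⟫ := by
      funext z; rw [hdef]; simp [real_inner_self_eq_norm_sq]
    rw [heq]
    have h3 := h1.sub (h2.const_mul (μ/2))
    refine h3.congr_fderiv ?_
    ext w
    simp [InnerProductSpace.toDual_apply_apply, inner_sub_left, inner_smul_left,
      fderivInnerCLM_apply, real_inner_comm]
    ring
  have key := convex_first_order hsc hgrad y
  simp only [inner_sub_left, inner_smul_left] at key ⊢
  have hexp : ‖y - x‖ ^ 2 = ‖y‖ ^ 2 - 2 * ⟪x, y - x⟫ - ‖x‖ ^ 2 := by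
    rw [show y - x = y - x from rfl]
    simp only [inner_sub_right, real_inner_self_eq_norm_sq]
    rw [@norm_sub_sq_real E]
    rw [real_inner_comm]
    ring
  rw [hdef] at key
  simp only [starRingEnd_apply, star_trivial] at key
  rw [hexp]
  ring_nf at key ⊢
  linarith

end Helpers

lemma posdef_inv_bounds {n : ℕ} [NeZero n] {H : Matrix (Fin n) (Fin n) ℝ} (hH : H.PosDef)
    {lmin lmax : ℝ} (h0 : 0 < lmin)
    (hlo : ∀ i, lmin ≤ hH.1.eigenvalues i) (hhi : ∀ i, hH.1.eigenvalues i ≤ lmax)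
    (x : EuclideanSpace ℝ (Fin n)) :
    ‖x‖ ^ 2 / lmax ≤ ⟪x, Matrix.toEuclideanLin H⁻¹ x⟫ ∧
      ‖Matrix.toEuclideanLin H⁻¹ x‖ ^ 2 ≤ ‖x‖ ^ 2 / lmin ^ 2 := by
  set b := hH.1.eigenvectorBasis with hb
  set lam := hH.1.eigenvalues with hlam
  set T := Matrix.toEuclideanLin H⁻¹ with hT
  have hlam_pos : ∀ i, 0 < lam i := fun i => hH.eigenvalues_pos i
  have hlmax : 0 < lmax := lt_of_lt_of_le (hlam_pos (Classical.arbitrary _))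
    (hhi (Classical.arbitrary _))
  have hdet : IsUnit H.det := isUnit_iff_ne_zero.mpr hH.det_pos.ne'
  have hinv : ∀ j, T (b j) = (lam j)⁻¹ • b j := by
    intro j
    have h1 : H *ᵥ ⇑(b j) = lam j • ⇑(b j) := hH.1.mulVec_eigenvectorBasis j
    have h2 : H⁻¹ *ᵥ (lam j • ⇑(b j)) = ⇑(b j) := by
      rw [← h1, mulVec_mulVec, Matrix.nonsing_inv_mul _ hdet, one_mulVec]
    rw [mulVec_smul] at h2
    have h3 : H⁻¹ *ᵥ ⇑(b j) = (lam j)⁻¹ • ⇑(b j) := by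
      calc H⁻¹ *ᵥ ⇑(b j) = (lam j)⁻¹ • (lam j • (H⁻¹ *ᵥ ⇑(b j))) := by
            rw [smul_smul, inv_mul_cancel₀ (hlam_pos j).ne', one_smul]
        _ = (lam j)⁻¹ • ⇑(b j) := by rw [h2]
    rw [hT, Matrix.toEuclideanLin_apply]
    have h4 : (WithLp.equiv 2 (Fin n → ℝ)) (b j) = ⇑(b j) := rfl
    rw [h3]
    simp
  have hx : T x = ∑ i, b.repr x i • ((lam i)⁻¹ • b i) := by
    conv_lhs => rw [← b.sum_repr x]
    rw [map_sum]
    exact Finset.sum_congr rfl fun i _ => by rw [T.map_smul, hinv i]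
  have hrepr : ∀ j, b.repr (T x) j = (lam j)⁻¹ * b.repr x j := by
    intro j
    rw [b.repr_apply_apply, hx, inner_sum]
    rw [Finset.sum_eq_single j]
    · rw [real_inner_smul_right, real_inner_smul_right, real_inner_self_eq_norm_sq,
        b.orthonormal.1 j]
      simp only [one_pow, mul_one, smul_eq_mul]
      ring
    · intro i _ hij
      rw [real_inner_smul_right, real_inner_smul_right, b.orthonormal.2 (Ne.symm hij)]
      ring
    · simp
  have hinner : ∀ y z : EuclideanSpace ℝ (Fin n),
      ⟪y, z⟫ = ∑ j, b.repr y j * b.repr z j := by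
    intro y z
    calc ⟪y, z⟫ = ⟪b.repr y, b.repr z⟫ := (b.repr.inner_map_map y z).symm
      _ = _ := by
        rw [PiLp.inner_apply]
        simp only [RCLike.inner_apply, starRingEnd_apply, star_trivial]
        exact Finset.sum_congr rfl fun _ _ => mul_comm _ _
  have hnormx : ‖x‖ ^ 2 = ∑ j, (b.repr x j) ^ 2 := by
    rw [← real_inner_self_eq_norm_sq, hinner]
    exact Finset.sum_congr rfl fun j _ => (sq _).symm
  constructor
  · rw [hinner x (T x)]
    have e1 : ∀ j, (lmax)⁻¹ * (b.repr x j) ^ 2 ≤ b.repr x j * b.repr (T x) j := by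
      intro j
      rw [hrepr j]
      have h5 : lmax⁻¹ ≤ (lam j)⁻¹ := by
        apply inv_anti₀ (hlam_pos j) (hhi j)
      calc lmax⁻¹ * (b.repr x j) ^ 2 ≤ (lam j)⁻¹ * (b.repr x j) ^ 2 :=
            mul_le_mul_of_nonneg_right h5 (sq_nonneg _)
        _ = b.repr x j * ((lam j)⁻¹ * b.repr x j) := by ring
    calc ‖x‖ ^ 2 / lmax = ∑ j, lmax⁻¹ * (b.repr x j) ^ 2 := by
          rw [hnormx, ← Finset.mul_sum, div_eq_inv_mul]
      _ ≤ _ := Finset.sum_le_sum fun j _ => e1 j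
  · rw [← real_inner_self_eq_norm_sq, hinner]
    have e2 : ∀ j, b.repr (T x) j * b.repr (T x) j ≤ (lmin)⁻¹ ^ 2 * (b.repr x j) ^ 2 := by
      intro j
      rw [hrepr j]
      have h5 : (lam j)⁻¹ ≤ lmin⁻¹ := inv_anti₀ h0 (hlo j)
      have h6 : (0:ℝ) ≤ (lam j)⁻¹ := (inv_pos.mpr (hlam_pos j)).le
      calc (lam j)⁻¹ * b.repr x j * ((lam j)⁻¹ * b.repr x j)
            = ((lam j)⁻¹)^2 * (b.repr x j)^2 := by ring
        _ ≤ (lmin⁻¹)^2 * (b.repr x j)^2 := by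
            apply mul_le_mul_of_nonneg_right _ (sq_nonneg _)
            exact pow_le_pow_left₀ h6 h5 2
    calc (∑ j, b.repr (T x) j * b.repr (T x) j)
          ≤ ∑ j, (lmin)⁻¹ ^ 2 * (b.repr x j) ^ 2 := Finset.sum_le_sum fun j _ => e2 j
      _ = ‖x‖ ^ 2 / lmin ^ 2 := by
          rw [hnormx, ← Finset.mul_sum]
          field_simp

set_option maxHeartbeats 2000000 in
/-- One quasi-Newton step with exact line search on a `μ`-strongly convex
differentiable function, with SPD `H` of condition number at most `σ` and `∇f`
`L`-Lipschitz along the step, contracts the objective gap by `(1 - μ/(σ²L))`. -/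
theorem quasi_newton_one_step_contraction
    (n : ℕ) [NeZero n]
    (f : EuclideanSpace ℝ (Fin n) → ℝ) (μ L σ : ℝ)
    (hμ : 0 < μ) (hμL : μ ≤ L)
    (hsc : ConvexOn ℝ Set.univ (fun x => f x - μ / 2 * ‖x‖ ^ 2))
    (hf : Differentiable ℝ f)
    (vstar : EuclideanSpace ℝ (Fin n)) (hmin : ∀ w, f vstar ≤ f w)
    (H : Matrix (Fin n) (Fin n) ℝ) (hH : H.PosDef)
    (hσ : (⨆ i, hH.1.eigenvalues i) / (⨅ i, hH.1.eigenvalues i) ≤ σ)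
    (v : EuclideanSpace ℝ (Fin n))
    (Δv : EuclideanSpace ℝ (Fin n))
    (hΔv : Δv = -(WithLp.equiv 2 (Fin n → ℝ)).symm
        (H⁻¹.mulVec (WithLp.equiv 2 (Fin n → ℝ) (gradient f v))))
    (αstar : ℝ) (hαs : 0 < αstar)
    (hα : IsMinOn (fun a : ℝ => f (v + a • Δv)) (Set.Ioi 0) αstar)
    (hLip : LipschitzOnWith (Real.toNNReal L) (gradient f)
      (segment ℝ v (v + αstar • Δv))) :
    f (v + αstar • Δv) - f vstar ≤ (1 - μ / (σ ^ 2 * L)) * (f v - f vstar) := by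
  have hL : 0 < L := lt_of_lt_of_le hμ hμL
  set g : EuclideanSpace ℝ (Fin n) := gradient f v with hg
  -- eigenvalue setup
  set lam := hH.1.eigenvalues with hlamdef
  set lmin := ⨅ i, lam i with hlmin
  set lmax := ⨆ i, lam i with hlmax
  have hlam_pos : ∀ i, 0 < lam i := fun i => hH.eigenvalues_pos i
  have hlo : ∀ i, lmin ≤ lam i := fun i =>
    ciInf_le (Set.Finite.bddBelow (Set.finite_range lam)) i
  have hhi : ∀ i, lam i ≤ lmax := fun i =>
    le_ciSup (Set.Finite.bddAbove (Set.finite_range lam)) i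
  have hlmin_pos : 0 < lmin := by
    obtain ⟨i0, hi0⟩ := Finite.exists_min lam
    exact lt_of_lt_of_le (hlam_pos i0) (le_ciInf hi0)
  have hminmax : lmin ≤ lmax := le_trans (hlo (Classical.arbitrary _)) (hhi (Classical.arbitrary _))
  have hlmax_pos : 0 < lmax := lt_of_lt_of_le hlmin_pos hminmax
  have hσ1 : (1:ℝ) ≤ σ := le_trans (by rw [le_div_iff₀ hlmin_pos]; simpa using hminmax) hσ
  have hσ0 : 0 < σ := lt_of_lt_of_le one_pos hσ1
  have hml : lmax ≤ σ * lmin := by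
    rw [div_le_iff₀ hlmin_pos] at hσ; linarith
  -- PL inequality
  have hPL : 2 * μ * (f v - f vstar) ≤ ‖g‖ ^ 2 := by
    have h1 := strong_first_order hsc hf v vstar
    have h2 : ⟪g, vstar - v⟫ ≥ -(‖g‖ * ‖vstar - v‖) := by
      have := abs_real_inner_le_norm g (vstar - v)
      have := abs_le.mp this
      linarith [this.1]
    nlinarith [sq_nonneg (‖g‖ - μ * ‖vstar - v‖), hμ, h1]
  have hD0 : 0 ≤ f v - f vstar := by linarith [hmin v]
  by_cases hgz : g = 0
  · -- gradient zero : v is a minimizer and the step is zero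
    have hΔ0 : Δv = 0 := by
      rw [hΔv, hg] at *
      rw [hgz]
      simp
    have hfv : f v = f vstar := by
      have := strong_first_order hsc hf v vstar
      rw [← hg, hgz] at this
      simp at this
      have := hmin v
      nlinarith [sq_nonneg ‖vstar - v‖]
    rw [hΔ0]
    simp [hfv]
  -- main case
  have hgnorm : 0 < ‖g‖ := norm_pos_iff.mpr hgz
  set T := Matrix.toEuclideanLin H⁻¹ with hTdef
  have hΔvT : Δv = -(T g) := by rw [hΔv, hTdef, Matrix.toEuclideanLin_apply]; rfl
  obtain ⟨hc1, hn1⟩ := posdef_inv_bounds hH hlmin_pos hlo hhi g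
  set c : ℝ := ⟪g, T g⟫ with hcdef
  have hc_pos : 0 < c := lt_of_lt_of_le (by positivity) hc1
  have hΔne : Δv ≠ 0 := by
    intro h
    rw [h] at hΔvT
    have hTg : T g = 0 := by
      have := hΔvT.symm
      rwa [neg_eq_zero] at this
    rw [hcdef, hTg, inner_zero_right] at hc_pos
    exact lt_irrefl _ hc_pos
  have hN : 0 < ‖Δv‖ ^ 2 := pow_pos (norm_pos_iff.mpr hΔne) 2
  have hgΔ : ⟪g, Δv⟫ = -c := by rw [hΔvT, inner_neg_right, hcdef]
  have hnormΔ : ‖Δv‖ = ‖T g‖ := by rw [hΔvT, norm_neg]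
  -- derivative of the line restriction
  set φ : ℝ → ℝ := fun t => f (v + t • Δv) with hφdef
  have hφd : ∀ t : ℝ, HasDerivAt φ ⟪gradient f (v + t • Δv), Δv⟫ t := by
    intro t
    have hA : HasDerivAt (fun s : ℝ => v + s • Δv) Δv t := by
      simpa using ((hasDerivAt_id t).smul_const Δv).const_add v
    have := (hf (v + t • Δv)).hasGradientAt.hasFDerivAt.comp_hasDerivAt t hA
    rw [InnerProductSpace.toDual_apply_apply] at this; exact this
  -- segment membership
  have hseg : ∀ s ∈ Icc (0:ℝ) αstar, v + s • Δv ∈ segment ℝ v (v + αstar • Δv) := by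
    intro s hs
    rw [segment_eq_image']
    refine ⟨s / αstar, ⟨div_nonneg hs.1 hαs.le, (div_le_one hαs).mpr hs.2⟩, ?_⟩
    show v + (s / αstar) • (v + αstar • Δv - v) = v + s • Δv
    rw [add_sub_cancel_left, smul_smul, div_mul_cancel₀ _ hαs.ne']
  -- Lipschitz bound along the segment
  have hlip : ∀ s ∈ Icc (0:ℝ) αstar,
      ‖gradient f (v + s • Δv) - g‖ ≤ L * (s * ‖Δv‖) := by
    intro s hs
    have h1 := hLip.dist_le_mul (v + s • Δv) (hseg s hs) v
      (left_mem_segment ℝ v (v + αstar • Δv))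
    rw [dist_eq_norm, dist_eq_norm] at h1
    have h2 : v + s • Δv - v = s • Δv := by abel
    rw [h2, norm_smul, Real.norm_eq_abs, abs_of_nonneg hs.1,
      Real.coe_toNNReal L hL.le] at h1
    exact h1
  have hderiv_le : ∀ s ∈ Icc (0:ℝ) αstar,
      ⟪gradient f (v + s • Δv), Δv⟫ ≤ -c + L * s * ‖Δv‖ ^ 2 := by
    intro s hs
    have h1 : ⟪gradient f (v + s • Δv) - g, Δv⟫ ≤ ‖gradient f (v + s • Δv) - g‖ * ‖Δv‖ :=
      real_inner_le_norm _ _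
    have h2 := hlip s hs
    have h3 : ⟪gradient f (v + s • Δv), Δv⟫
        = ⟪gradient f (v + s • Δv) - g, Δv⟫ + ⟪g, Δv⟫ := by
      rw [inner_sub_left]; ring
    rw [h3, hgΔ]
    have h4 : ‖gradient f (v + s • Δv) - g‖ * ‖Δv‖ ≤ L * (s * ‖Δv‖) * ‖Δv‖ :=
      mul_le_mul_of_nonneg_right h2 (norm_nonneg _)
    have h5 : L * (s * ‖Δv‖) * ‖Δv‖ = L * s * ‖Δv‖ ^ 2 := by ring
    linarith
  -- descent estimate
  have hdesc : ∀ t ∈ Icc (0:ℝ) αstar, φ t ≤ f v - c * t + L / 2 * ‖Δv‖ ^ 2 * t ^ 2 := by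
    intro t ht
    have hψd : ∀ s : ℝ, HasDerivAt (fun s => φ s + c * s - L / 2 * ‖Δv‖ ^ 2 * s ^ 2)
        (⟪gradient f (v + s • Δv), Δv⟫ + c - L * ‖Δv‖ ^ 2 * s) s := by
      intro s
      have h1 := (hφd s).add ((hasDerivAt_id s).const_mul c)
      have hsq : HasDerivAt (fun s : ℝ => L / 2 * ‖Δv‖ ^ 2 * s ^ 2)
          (L / 2 * ‖Δv‖ ^ 2 * (2 * s)) s := by
        simpa [mul_comm, mul_assoc, mul_left_comm] using
          ((hasDerivAt_pow 2 s).const_mul (L / 2 * ‖Δv‖ ^ 2))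
      have h2 := h1.sub hsq
      refine h2.congr_deriv ?_
      ring
    have hanti : AntitoneOn (fun s => φ s + c * s - L / 2 * ‖Δv‖ ^ 2 * s ^ 2) (Icc 0 αstar) := by
      apply antitoneOn_of_deriv_nonpos (convex_Icc 0 αstar)
      · exact fun x _ => (hψd x).continuousAt.continuousWithinAt
      · exact fun x _ => (hψd x).differentiableAt.differentiableWithinAt
      · intro x hx
        rw [(hψd x).deriv]
        rw [interior_Icc] at hx
        have h5 := hderiv_le x ⟨hx.1.le, hx.2.le⟩
        have h6 : L * x * ‖Δv‖ ^ 2 = L * ‖Δv‖ ^ 2 * x := by ring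
        linarith
    have h7 := hanti (show (0:ℝ) ∈ Icc (0:ℝ) αstar from ⟨le_refl 0, hαs.le⟩) ht ht.1
    simp only at h7
    have hψ0 : φ 0 + c * 0 - L / 2 * ‖Δv‖ ^ 2 * 0 ^ 2 = f v := by
      simp [hφdef]
    rw [hψ0] at h7
    linarith
  -- the exact line search point is critical
  have hcrit : ⟪gradient f (v + αstar • Δv), Δv⟫ = 0 := by
    have hloc : IsLocalMin φ αstar := hα.isLocalMin (Ioi_mem_nhds hαs)
    exact hloc.hasDerivAt_eq_zero (hφd αstar)
  have ht0le : c / (L * ‖Δv‖ ^ 2) ≤ αstar := by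
    have h1 : c = ⟪gradient f (v + αstar • Δv) - g, Δv⟫ := by
      rw [inner_sub_left, hcrit, hgΔ]; ring
    have h2 : ⟪gradient f (v + αstar • Δv) - g, Δv⟫
        ≤ ‖gradient f (v + αstar • Δv) - g‖ * ‖Δv‖ := real_inner_le_norm _ _
    have h3 := hlip αstar ⟨hαs.le, le_refl _⟩
    have h4 : c ≤ L * αstar * ‖Δv‖ ^ 2 := by nlinarith [norm_nonneg Δv]
    rw [div_le_iff₀ (by positivity)]
    nlinarith
  set t0 := c / (L * ‖Δv‖ ^ 2) with ht0
  have ht0pos : 0 < t0 := div_pos hc_pos (by positivity)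
  have hstep : φ αstar ≤ f v - c ^ 2 / (2 * L * ‖Δv‖ ^ 2) := by
    have h1 : φ αstar ≤ φ t0 := isMinOn_iff.mp hα t0 ht0pos
    have h2 := hdesc t0 ⟨ht0pos.le, ht0le⟩
    have h3 : f v - c * t0 + L / 2 * ‖Δv‖ ^ 2 * t0 ^ 2 = f v - c ^ 2 / (2 * L * ‖Δv‖ ^ 2) := by
      rw [ht0]; field_simp; ring
    linarith
  -- final algebra
  have e2 : ‖Δv‖ ^ 2 ≤ ‖g‖ ^ 2 / lmin ^ 2 := by rw [hnormΔ]; exact hn1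
  have key : μ / (σ ^ 2 * L) * (f v - f vstar) ≤ c ^ 2 / (2 * L * ‖Δv‖ ^ 2) := by
    rw [div_mul_eq_mul_div, div_le_div_iff₀ (by positivity) (by positivity)]
    have m1 : ‖Δv‖ ^ 2 * lmin ^ 2 ≤ ‖g‖ ^ 2 := by
      rw [← le_div_iff₀ (by positivity)]; exact e2
    have m2 : ‖g‖ ^ 2 ≤ c * lmax := by
      rw [← div_le_iff₀ hlmax_pos]; exact hc1
    have m3 : lmax ^ 2 ≤ σ ^ 2 * lmin ^ 2 := by nlinarith
    have m4 : ‖g‖ ^ 2 * (‖Δv‖ ^ 2 * lmin ^ 2) ≤ (c * lmax) ^ 2 := by nlinarith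
    have m5 : (c * lmax) ^ 2 ≤ c ^ 2 * (σ ^ 2 * lmin ^ 2) := by nlinarith
    have m6 : (2 * μ * (f v - f vstar)) * (‖Δv‖ ^ 2 * lmin ^ 2) ≤ c ^ 2 * (σ ^ 2 * lmin ^ 2) := by
      calc (2 * μ * (f v - f vstar)) * (‖Δv‖ ^ 2 * lmin ^ 2)
          ≤ ‖g‖ ^ 2 * (‖Δv‖ ^ 2 * lmin ^ 2) :=
            mul_le_mul_of_nonneg_right hPL (by positivity)
        _ ≤ (c * lmax) ^ 2 := m4
        _ ≤ _ := m5
    have hl2 : 0 < lmin ^ 2 := by positivity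
    have m7 : (2 * μ * (f v - f vstar)) * ‖Δv‖ ^ 2 ≤ c ^ 2 * σ ^ 2 := by
      have := le_of_mul_le_mul_right (by
        calc (2 * μ * (f v - f vstar)) * ‖Δv‖ ^ 2 * lmin ^ 2
            = (2 * μ * (f v - f vstar)) * (‖Δv‖ ^ 2 * lmin ^ 2) := by ring
          _ ≤ c ^ 2 * (σ ^ 2 * lmin ^ 2) := m6
          _ = c ^ 2 * σ ^ 2 * lmin ^ 2 := by ring) hl2
      exact this
    nlinarith [m7, hL]
  have hfinal : f (v + αstar • Δv) ≤ f v - c ^ 2 / (2 * L * ‖Δv‖ ^ 2) := hstep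
  have hgoal : (1 - μ / (σ ^ 2 * L)) * (f v - f vstar)
      = (f v - f vstar) - μ / (σ ^ 2 * L) * (f v - f vstar) := by ring
  rw [hgoal]
  linarith
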